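/- Let 0 < α < 1 and let w : ℕ → (0,∞) with w(0) = 1 satisfy w(k) = k^α + v(k) where v(k) = o(k^α) as k → ∞. Then for every r > 0 there exist constants c₁, c₂ > 0 and D < ∞ such that for all k ≥ 1, exp(c₁ k^{1−α} − D) ≤ ∏_{j=0}^{k−1} (r + w(j))/w(j) ≤ exp(c₂ k^{1−α} + D). -/

import Mathlib

open Filter Asymptotics

-- key pointwise inequality: (1-α)(n+1)^{-α} ≤ (n+1)^{1-α} - n^{1-α}
lemma key_rpow_diff (α : ℝ) (hα0 : 0 < α) (hα1 : α < 1) (n : ℕ) :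
    (1 - α) * ((n : ℝ) + 1) ^ (-α) ≤ ((n : ℝ) + 1) ^ (1 - α) - (n : ℝ) ^ (1 - α) := by
  set t : ℝ := (n : ℝ) / ((n : ℝ) + 1) with ht
  have hn1 : (0 : ℝ) < (n : ℝ) + 1 := by positivity
  have ht0 : 0 ≤ t := by positivity
  have hgm : t ^ (1 - α) * (1 : ℝ) ^ α ≤ (1 - α) * t + α * 1 :=
    Real.geom_mean_le_arith_mean2_weighted (by linarith) hα0.le ht0 zero_le_one (by ring)
  rw [Real.one_rpow, mul_one, mul_one] at hgm
  have hnt : (n : ℝ) = ((n : ℝ) + 1) * t := by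
    rw [ht, mul_comm, div_mul_cancel₀ _ hn1.ne']
  have hrw : (n : ℝ) ^ (1 - α) = ((n : ℝ) + 1) ^ (1 - α) * t ^ (1 - α) := by
    calc (n : ℝ) ^ (1 - α) = (((n : ℝ) + 1) * t) ^ (1 - α) := by rw [← hnt]
      _ = ((n : ℝ) + 1) ^ (1 - α) * t ^ (1 - α) := Real.mul_rpow hn1.le ht0
  have h1t : 1 - t = 1 / ((n : ℝ) + 1) := by
    rw [ht, eq_div_iff hn1.ne', sub_mul, div_mul_cancel₀ _ hn1.ne']; ring
  have hpow : ((n : ℝ) + 1) ^ (1 - α) * (1 / ((n : ℝ) + 1)) = ((n : ℝ) + 1) ^ (-α) := by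
    rw [one_div, ← Real.rpow_neg_one ((n : ℝ) + 1), ← Real.rpow_add hn1]
    congr 1; ring
  calc (1 - α) * ((n : ℝ) + 1) ^ (-α)
      = ((n : ℝ) + 1) ^ (1 - α) * ((1 - α) * (1 - t)) := by
        rw [h1t]; rw [← hpow]; ring
    _ ≤ ((n : ℝ) + 1) ^ (1 - α) * (1 - t ^ (1 - α)) := by
        apply mul_le_mul_of_nonneg_left _ (Real.rpow_nonneg hn1.le _)
        nlinarith
    _ = ((n : ℝ) + 1) ^ (1 - α) - (n : ℝ) ^ (1 - α) := by rw [hrw]; ring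

-- sum bound: ∑_{j∈Ico 1 k} j^{-α} ≤ k^{1-α}/(1-α)
lemma sum_Ico_rpow_le (α : ℝ) (hα0 : 0 < α) (hα1 : α < 1) (k : ℕ) :
    ∑ j ∈ Finset.Ico 1 k, ((j : ℝ)) ^ (-α) ≤ (k : ℝ) ^ (1 - α) / (1 - α) := by
  have h1α : (0 : ℝ) < 1 - α := by linarith
  have : ∑ j ∈ Finset.Ico 1 k, ((j : ℝ)) ^ (-α)
      = ∑ i ∈ Finset.range (k - 1), (((1 + i : ℕ) : ℝ)) ^ (-α) := by
    rw [Finset.sum_Ico_eq_sum_range]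
  rw [this]
  have hstep : ∀ i ∈ Finset.range (k - 1),
      (((1 + i : ℕ) : ℝ)) ^ (-α)
        ≤ (((i : ℝ) + 1) ^ (1 - α) - (i : ℝ) ^ (1 - α)) / (1 - α) := by
    intro i _
    rw [le_div_iff₀ h1α]
    have := key_rpow_diff α hα0 hα1 i
    push_cast
    rw [add_comm (1:ℝ) (i:ℝ)]
    linarith
  calc ∑ i ∈ Finset.range (k - 1), (((1 + i : ℕ) : ℝ)) ^ (-α)
      ≤ ∑ i ∈ Finset.range (k - 1), (((i : ℝ) + 1) ^ (1 - α) - (i : ℝ) ^ (1 - α)) / (1 - α) :=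
        Finset.sum_le_sum hstep
    _ = (∑ i ∈ Finset.range (k - 1), ((((i + 1 : ℕ)) : ℝ) ^ (1 - α) - ((i : ℕ) : ℝ) ^ (1 - α))) / (1 - α) := by
        rw [Finset.sum_div]
        refine Finset.sum_congr rfl fun i _ => ?_
        push_cast; ring
    _ = (((k - 1 : ℕ) : ℝ) ^ (1 - α) - ((0 : ℕ) : ℝ) ^ (1 - α)) / (1 - α) := by
        rw [Finset.sum_range_sub (fun n : ℕ => ((n : ℕ) : ℝ) ^ (1 - α))]
    _ ≤ (k : ℝ) ^ (1 - α) / (1 - α) := by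
        rw [Nat.cast_zero, Real.zero_rpow (by linarith : (1:ℝ) - α ≠ 0), sub_zero]
        gcongr
        exact_mod_cast Nat.sub_le k 1

/-- If `w k = k^α + v k` with `0 < α < 1` and `v k = o(k^α)`, then for every
`r > 0` there are `c₁, c₂ > 0` and `D < ∞` with
`exp (c₁ k^{1-α} - D) ≤ ∏_{j=0}^{k-1} (r + w j)/w j ≤ exp (c₂ k^{1-α} + D)` for all `k ≥ 1`. -/
theorem statement13
    (α : ℝ) (hα0 : 0 < α) (hα1 : α < 1)
    (w v : ℕ → ℝ) (hw : ∀ k, 0 < w k) (hw0 : w 0 = 1)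
    (hwv : ∀ k, w k = (k : ℝ) ^ α + v k)
    (hv : v =o[atTop] fun k : ℕ => (k : ℝ) ^ α)
    (r : ℝ) (hr : 0 < r) :
    ∃ c₁ c₂ D : ℝ, 0 < c₁ ∧ 0 < c₂ ∧ ∀ k : ℕ, 1 ≤ k →
      Real.exp (c₁ * (k : ℝ) ^ (1 - α) - D) ≤ (∏ j ∈ Finset.range k, (r + w j) / w j) ∧
      (∏ j ∈ Finset.range k, (r + w j) / w j) ≤ Real.exp (c₂ * (k : ℝ) ^ (1 - α) + D) := by
  have h1α : (0 : ℝ) < 1 - α := by linarith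
  -- eventual bounds
  have hvev : ∀ᶠ k : ℕ in atTop, ‖v k‖ ≤ (1/2 : ℝ) * ‖(k : ℝ) ^ α‖ := hv.def (by norm_num)
  have hrev : ∀ᶠ k : ℕ in atTop, r ≤ (k : ℝ) ^ α :=
    ((tendsto_rpow_atTop hα0).comp tendsto_natCast_atTop_atTop).eventually_ge_atTop r
  obtain ⟨N₀, hN₀⟩ := Filter.eventually_atTop.1 (hvev.and hrev)
  set N : ℕ := N₀ + 1 with hN
  have hN1 : 1 ≤ N := Nat.le_add_left 1 N₀
  -- basic facts for j ≥ N
  have hja : ∀ j : ℕ, N ≤ j → 0 < (j : ℝ) ^ α := by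
    intro j hj
    have : (0 : ℝ) < (j : ℝ) := by exact_mod_cast (hN1.trans hj)
    positivity
  have hwlo : ∀ j : ℕ, N ≤ j → (1/2 : ℝ) * (j : ℝ) ^ α ≤ w j := by
    intro j hj
    have h := (hN₀ j (Nat.le_of_succ_le hj)).1
    rw [Real.norm_eq_abs, Real.norm_eq_abs, abs_of_nonneg (hja j hj).le] at h
    have := (abs_le.1 h).1
    rw [hwv j]; linarith
  have hwhi : ∀ j : ℕ, N ≤ j → w j ≤ 2 * (j : ℝ) ^ α := by
    intro j hj
    have h := (hN₀ j (Nat.le_of_succ_le hj)).1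
    rw [Real.norm_eq_abs, Real.norm_eq_abs, abs_of_nonneg (hja j hj).le] at h
    have := (abs_le.1 h).2
    have := hja j hj
    rw [hwv j]; linarith
  have hrle : ∀ j : ℕ, N ≤ j → r ≤ (j : ℝ) ^ α := fun j hj =>
    (hN₀ j (Nat.le_of_succ_le hj)).2
  -- constants
  set C : ℝ := ∑ j ∈ Finset.range N, r / w j with hC
  have hC0 : 0 ≤ C := Finset.sum_nonneg fun j _ => div_nonneg hr.le (hw j).le
  set c₁ : ℝ := r / 6 with hc₁
  set c₂ : ℝ := 2 * r / (1 - α) with hc₂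
  set D : ℝ := c₁ * (2 * N) + C with hD
  have hD0 : 0 ≤ D := by positivity
  have hDC : C ≤ D := by
    have : 0 ≤ c₁ * (2 * N) := by positivity
    linarith
  -- factor facts
  have hfac_pos : ∀ j : ℕ, 0 < (r + w j) / w j := fun j =>
    div_pos (by linarith [hw j]) (hw j)
  have hfac_one : ∀ j : ℕ, 1 ≤ (r + w j) / w j := fun j =>
    (one_le_div (hw j)).2 (by linarith [hw j])
  have hP : ∀ k : ℕ, 0 < ∏ j ∈ Finset.range k, (r + w j) / w j := fun k =>
    Finset.prod_pos fun j _ => hfac_pos j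
  have hP1 : ∀ k : ℕ, 1 ≤ ∏ j ∈ Finset.range k, (r + w j) / w j := fun k => by
    calc (1:ℝ) = ∏ _j ∈ Finset.range k, (1:ℝ) := by simp
      _ ≤ ∏ j ∈ Finset.range k, (r + w j) / w j :=
        Finset.prod_le_prod (fun _ _ => zero_le_one) (fun j _ => hfac_one j)
  have hlog : ∀ k : ℕ, Real.log (∏ j ∈ Finset.range k, (r + w j) / w j)
      = ∑ j ∈ Finset.range k, Real.log ((r + w j) / w j) := fun k =>
    Real.log_prod fun j _ => (hfac_pos j).ne'
  refine ⟨c₁, c₂, D, by positivity, by positivity, fun k hk => ?_⟩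
  have hk0 : (0 : ℝ) < (k : ℝ) := by exact_mod_cast hk
  constructor
  · -- lower bound
    rcases lt_or_ge k (2 * N) with hsmall | hbig
    · -- small k : exp(...) ≤ 1 ≤ P
      refine le_trans ?_ (hP1 k)
      rw [Real.exp_le_one_iff]
      have h1 : (k : ℝ) ^ (1 - α) ≤ (k : ℝ) := by
        have := Real.rpow_le_rpow_of_exponent_le (by exact_mod_cast hk : (1:ℝ) ≤ (k:ℝ)) (by linarith : 1 - α ≤ 1)
        rwa [Real.rpow_one] at this
      have h2 : (k : ℝ) ≤ 2 * N := by exact_mod_cast hsmall.le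
      have : c₁ * (k : ℝ) ^ (1 - α) ≤ c₁ * (2 * N) := by
        have hc₁0 : (0:ℝ) ≤ c₁ := by positivity
        nlinarith
      linarith
    · -- large k
      have hNk : N ≤ k := le_trans (by omega) hbig
      rw [← Real.le_log_iff_exp_le (hP k), hlog k]
      have hsub : Finset.Ico N k ⊆ Finset.range k := by
        intro j hj
        simp only [Finset.mem_Ico] at hj
        exact Finset.mem_range.2 hj.2
      have hstep1 : ∑ j ∈ Finset.Ico N k, Real.log ((r + w j) / w j)
          ≤ ∑ j ∈ Finset.range k, Real.log ((r + w j) / w j) :=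
        Finset.sum_le_sum_of_subset_of_nonneg hsub fun j _ _ =>
          Real.log_nonneg (hfac_one j)
      have hka : 0 < (k : ℝ) ^ α := by positivity
      have hterm : ∀ j ∈ Finset.Ico N k, r / (3 * (k : ℝ) ^ α) ≤ Real.log ((r + w j) / w j) := by
        intro j hj
        simp only [Finset.mem_Ico] at hj
        have hjN := hj.1
        have hx : 0 < (r + w j) / w j := hfac_pos j
        -- log x ≥ 1 - x⁻¹
        have hinv := Real.log_le_sub_one_of_pos (inv_pos.2 hx)
        rw [Real.log_inv] at hinv
        have hlogge : 1 - ((r + w j) / w j)⁻¹ ≤ Real.log ((r + w j) / w j) := by linarith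
        have hxinv : ((r + w j) / w j)⁻¹ = w j / (r + w j) := by
          rw [inv_div]
        have hwj := hw j
        have hrwj : 0 < r + w j := by linarith
        have heq : 1 - w j / (r + w j) = r / (r + w j) := by
          field_simp
          ring
        -- r + w j ≤ 3 k^α
        have hjk : (j : ℝ) ^ α ≤ (k : ℝ) ^ α :=
          Real.rpow_le_rpow (Nat.cast_nonneg j) (by exact_mod_cast hj.2.le) hα0.le
        have hbound : r + w j ≤ 3 * (k : ℝ) ^ α := by
          have := hwhi j hjN
          have := hrle j hjN
          linarith
        have : r / (3 * (k : ℝ) ^ α) ≤ r / (r + w j) := by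
          gcongr
        rw [hxinv, heq] at hlogge
        linarith
      have hstep2 : ∑ j ∈ Finset.Ico N k, (r / (3 * (k : ℝ) ^ α))
          ≤ ∑ j ∈ Finset.Ico N k, Real.log ((r + w j) / w j) :=
        Finset.sum_le_sum hterm
      have hsum : ∑ j ∈ Finset.Ico N k, (r / (3 * (k : ℝ) ^ α))
          = ((k : ℝ) - N) * (r / (3 * (k : ℝ) ^ α)) := by
        rw [Finset.sum_const, Nat.card_Ico, nsmul_eq_mul, Nat.cast_sub hNk]
      have hkN2 : (k : ℝ) / 2 ≤ (k : ℝ) - (N : ℝ) := by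
        have h2N : ((2 * N : ℕ) : ℝ) ≤ (k : ℝ) := Nat.cast_le.2 hbig
        rw [Nat.cast_mul, Nat.cast_ofNat] at h2N
        linarith
      have key : (r / 6) * (k : ℝ) ≤ ((k : ℝ) - N) * (r / 3) := by nlinarith
      have hchain : c₁ * (k : ℝ) ^ (1 - α) - D ≤ ((k : ℝ) - N) * (r / (3 * (k : ℝ) ^ α)) := by
        have e1 : c₁ * (k : ℝ) ^ (1 - α) = ((r / 6) * (k : ℝ)) * ((k : ℝ) ^ α)⁻¹ := by
          rw [Real.rpow_sub hk0, Real.rpow_one, hc₁]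
          ring
        have e2 : ((k : ℝ) - N) * (r / (3 * (k : ℝ) ^ α))
            = (((k : ℝ) - N) * (r / 3)) * ((k : ℝ) ^ α)⁻¹ := by
          field_simp
        rw [e1, e2]
        have := mul_le_mul_of_nonneg_right key (inv_nonneg.2 hka.le)
        linarith
      linarith [hchain, hsum.symm ▸ hstep2, hstep1]
  · -- upper bound
    rw [← Real.log_le_iff_le_exp (hP k), hlog k]
    have hterm : ∀ j ∈ Finset.range k, Real.log ((r + w j) / w j) ≤ r / w j := by
      intro j _
      have h := Real.log_le_sub_one_of_pos (hfac_pos j)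
      have : (r + w j) / w j - 1 = r / w j := by
        field_simp [(hw j).ne']
        ring
      linarith
    have hstep1 : ∑ j ∈ Finset.range k, Real.log ((r + w j) / w j)
        ≤ ∑ j ∈ Finset.range k, r / w j := Finset.sum_le_sum hterm
    have hstep2 : ∑ j ∈ Finset.range k, r / w j ≤ C + c₂ * (k : ℝ) ^ (1 - α) := by
      rcases le_or_gt k N with hkN | hNk
      · have hsub : Finset.range k ⊆ Finset.range N := Finset.range_subset_range.2 hkN
        have h1 : ∑ j ∈ Finset.range k, r / w j ≤ C :=
          Finset.sum_le_sum_of_subset_of_nonneg hsub fun j _ _ =>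
            div_nonneg hr.le (hw j).le
        have h2 : 0 ≤ c₂ * (k : ℝ) ^ (1 - α) := by positivity
        linarith
      · rw [Finset.range_eq_Ico, ← Finset.sum_Ico_consecutive _ (Nat.zero_le N) hNk.le]
        rw [← Finset.range_eq_Ico]
        have htail : ∑ j ∈ Finset.Ico N k, r / w j ≤ c₂ * (k : ℝ) ^ (1 - α) := by
          have hterm2 : ∀ j ∈ Finset.Ico N k, r / w j ≤ (2 * r) * (j : ℝ) ^ (-α) := by
            intro j hj
            simp only [Finset.mem_Ico] at hj
            have hjN := hj.1
            have hja' := hja j hjN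
            have h1 : r / w j ≤ r / ((1/2 : ℝ) * (j : ℝ) ^ α) := by
              gcongr
              exact hwlo j hjN
            have h2 : r / ((1/2 : ℝ) * (j : ℝ) ^ α) = (2 * r) * (j : ℝ) ^ (-α) := by
              rw [Real.rpow_neg (Nat.cast_nonneg j)]
              field_simp
            linarith
          have hstep3 : ∑ j ∈ Finset.Ico N k, r / w j
              ≤ ∑ j ∈ Finset.Ico N k, (2 * r) * (j : ℝ) ^ (-α) := Finset.sum_le_sum hterm2
          have hsub2 : Finset.Ico N k ⊆ Finset.Ico 1 k := by
            intro j hj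
            simp only [Finset.mem_Ico] at hj ⊢
            exact ⟨le_trans hN1 hj.1, hj.2⟩
          have hstep4 : ∑ j ∈ Finset.Ico N k, (2 * r) * (j : ℝ) ^ (-α)
              ≤ ∑ j ∈ Finset.Ico 1 k, (2 * r) * (j : ℝ) ^ (-α) :=
            Finset.sum_le_sum_of_subset_of_nonneg hsub2 fun j _ _ => by positivity
          have hstep5 : ∑ j ∈ Finset.Ico 1 k, (2 * r) * (j : ℝ) ^ (-α)
              ≤ (2 * r) * ((k : ℝ) ^ (1 - α) / (1 - α)) := by
            rw [← Finset.mul_sum]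
            exact mul_le_mul_of_nonneg_left (sum_Ico_rpow_le α hα0 hα1 k) (by positivity)
          have : (2 * r) * ((k : ℝ) ^ (1 - α) / (1 - α)) = c₂ * (k : ℝ) ^ (1 - α) := by
            rw [hc₂]; field_simp
          linarith
        linarith [le_refl C]
    have : C + c₂ * (k : ℝ) ^ (1 - α) ≤ c₂ * (k : ℝ) ^ (1 - α) + D := by linarith
    linarith
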